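/- Let σ = 1 and f(x) = (x² − x⁴/4)^{−3/2}. Fix n ≥ 2, masses m_1,…,m_n > 0 and a constant A > 0. Then there is at most one tuple (r, α_1,…,α_n) with 0 < r < (1/5)√10 and 0 = α_1 < α_2 < … < α_n < 2π such that for every i ∈ {1,…,n}: A² = Σ_{j≠i} m_j·(1 − cos(α_j − α_i))·f(√2·r·√(1 − cos(α_j − α_i))) and 0 = Σ_{j≠i} m_j·sin(α_j − α_i)·f(√2·r·√(1 − cos(α_j − α_i))). In other words, for each fixed set of masses and fixed angular velocity, there is at most one positive elliptic relative equilibrium of this polygonal class whose size r lies below the stated bound, up to rotation. -/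

import Mathlib

open Real Finset

/-- The reduced force-law factor of the curved n-body problem with `σ = 1`. -/
noncomputable def fpos (x : ℝ) : ℝ := (x ^ 2 - x ^ 4 / 4) ^ (-(3 : ℝ) / 2)

/-- The partial derivative in the angle variable of the pair potential
`P(θ,ρ) = Ψ(2 ρ sin(θ/2))`, where `Ψ' (x) = x · fpos x`. -/
noncomputable def Pth (u v : ℝ) : ℝ := v^2 * Real.sin u * fpos (2*v*Real.sin (u/2))

/-- The partial derivative in the radius variable of the pair potential. -/
noncomputable def Prh (u v : ℝ) : ℝ := 2*v*(1 - Real.cos u) * fpos (2*v*Real.sin (u/2))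

/-- The derivative of `t ↦ dθ·Pth(segment t) + dρ·Prh(segment t)` along a segment. -/
noncomputable def Dfun (b d v s1 c1 sn cn : ℝ) : ℝ :=
  b * ((2*d*v) * sn * ((2*v*s1)^2 - (2*v*s1)^4/4) ^ (-(3:ℝ)/2)
     + v^2 * (cn * b) * ((2*v*s1)^2 - (2*v*s1)^4/4) ^ (-(3:ℝ)/2)
     + v^2 * sn * ((-(3:ℝ)/2) * ((2*v*s1)^2 - (2*v*s1)^4/4) ^ (-(3:ℝ)/2 - 1)
          * ((2*(2*v*s1) - (2*v*s1)^3) * (2*d*s1 + v*c1*b))))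
  + d * ((2*d) * (1 - cn) * ((2*v*s1)^2 - (2*v*s1)^4/4) ^ (-(3:ℝ)/2)
     + (2*v) * (sn * b) * ((2*v*s1)^2 - (2*v*s1)^4/4) ^ (-(3:ℝ)/2)
     + 2*v*(1 - cn) * ((-(3:ℝ)/2) * ((2*v*s1)^2 - (2*v*s1)^4/4) ^ (-(3:ℝ)/2 - 1)
          * ((2*(2*v*s1) - (2*v*s1)^3) * (2*d*s1 + v*c1*b))))

set_option maxHeartbeats 1000000 in
/-- Negative definiteness of the Hessian quadratic form of the pair potential. -/
lemma quadD (s c v C dθ dρ : ℝ) (hs : 0 < s) (hs1 : s ≤ 1) (hsc : s^2+c^2 = 1)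
    (hv : 0 < v) (hv2 : v^2 < 2/5) (hC : 0 < C) (hne : ¬(dθ = 0 ∧ dρ = 0)) :
    (v^2*(1-2*s^2)*((2*v*s)^2-(2*v*s)^4/4)*C
        + 2*v^3*s*c^2*(-(3/2)*C*(2*(2*v*s)-(2*v*s)^3)))*dθ^2
    + 2*(4*v*s*c*((2*v*s)^2-(2*v*s)^4/4)*C
        + 4*v^2*s^2*c*(-(3/2)*C*(2*(2*v*s)-(2*v*s)^3)))*(dθ*dρ)
    + (4*s^2*((2*v*s)^2-(2*v*s)^4/4)*C
        + 8*v*s^3*(-(3/2)*C*(2*(2*v*s)-(2*v*s)^3)))*dρ^2 < 0 := by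
  have hs2 : s^2 = 1 - c^2 := by linarith
  have hx2s : (2*v*s)^2 < 8/5*s^2 := by
    nlinarith [mul_lt_mul_of_pos_right hv2 (show (0:ℝ) < s^2 by positivity)]
  have hx2 : (2*v*s)^2 < 8/5 := by nlinarith
  have hxpos : 0 < 2*v*s := by positivity
  have hw : 0 < (2*v*s)^2-(2*v*s)^4/4 := by nlinarith
  obtain ⟨A1, hA1def⟩ : ∃ a, a = v^2*(1-2*s^2)*((2*v*s)^2-(2*v*s)^4/4)*C
        + 2*v^3*s*c^2*(-(3/2)*C*(2*(2*v*s)-(2*v*s)^3)) := ⟨_, rfl⟩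
  obtain ⟨A2, hA2def⟩ : ∃ a, a = 4*v*s*c*((2*v*s)^2-(2*v*s)^4/4)*C
        + 4*v^2*s^2*c*(-(3/2)*C*(2*(2*v*s)-(2*v*s)^3)) := ⟨_, rfl⟩
  obtain ⟨A3, hA3def⟩ : ∃ a, a = 4*s^2*((2*v*s)^2-(2*v*s)^4/4)*C
        + 8*v*s^3*(-(3/2)*C*(2*(2*v*s)-(2*v*s)^3)) := ⟨_, rfl⟩
  rw [← hA1def, ← hA2def, ← hA3def]
  have hA1eq : A1 = -((2*v*s)^2/4*((2*v*s)^2-(2*v*s)^4/4)*C)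
      - v^2*c^2*C*((2*v*s)^2/4)*(8-5*(2*v*s)^2) := by
    rw [hA1def]; linear_combination ((-4)*s^2*v^4*C + 4*s^4*v^6*C) * hsc
  have hA1neg : A1 < 0 := by
    rw [hA1eq]
    have h1 : 0 < (2*v*s)^2/4*((2*v*s)^2-(2*v*s)^4/4)*C := by positivity
    have h2 : 0 ≤ v^2*c^2*C*((2*v*s)^2/4)*(8-5*(2*v*s)^2) := by
      have h3 : (0:ℝ) ≤ 8-5*(2*v*s)^2 := by nlinarith
      positivity
    linarith
  have hx2c : (2*v*s)^2 < 8/5*(1-c^2) := by rw [← hs2]; exact hx2s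
  have hbr : 0 < (8+4*c^2) - (2*v*s)^2*(5+4*c^2) := by
    nlinarith [mul_pos (sub_pos.mpr hx2c) (show (0:ℝ) < 5+4*c^2 by positivity),
      sq_nonneg c, sq_nonneg (c*c)]
  have hdeteq : A1*A3 - A2^2
      = C^2*(2*v*s)^6*(4-(2*v*s)^2)*((8+4*c^2) - (2*v*s)^2*(5+4*c^2))/16 := by
    rw [hA1def, hA2def, hA3def]
    linear_combination (256*s^6*v^6*C^2 - 896*s^8*v^8*C^2 + 640*s^10*v^10*C^2) * hsc
  have hdet : A2^2 < A1*A3 := by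
    have h4 : (0:ℝ) < 4-(2*v*s)^2 := by nlinarith
    have h5 : 0 < C^2*(2*v*s)^6*(4-(2*v*s)^2)*((8+4*c^2) - (2*v*s)^2*(5+4*c^2))/16 := by
      have hp1 : 0 < C^2*(2*v*s)^6 := by positivity
      have := mul_pos (mul_pos hp1 h4) hbr
      linarith
    linarith [hdeteq]
  by_cases hd : dρ = 0
  · have hb : dθ ≠ 0 := by tauto
    rw [hd]
    have : A1*dθ^2 < 0 := mul_neg_of_neg_of_pos hA1neg (by positivity)
    nlinarith [this]
  · have hd2 : 0 < dρ^2 := by positivity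
    have hkey : A1*(A1*dθ^2 + 2*A2*(dθ*dρ) + A3*dρ^2)
        = (A1*dθ + A2*dρ)^2 + (A1*A3 - A2^2)*dρ^2 := by ring
    nlinarith [hkey, sq_nonneg (A1*dθ + A2*dρ), mul_pos (sub_pos.mpr hdet) hd2]

/-- Derivative of the directional derivative function along a segment. -/
lemma hasDerivAt_aux (a b e d t : ℝ)
    (hW : (2*(e+t*d)*Real.sin ((a+t*b)/2))^2 - (2*(e+t*d)*Real.sin ((a+t*b)/2))^4/4 ≠ 0) :
    HasDerivAt (fun t : ℝ =>
        b * ((e+t*d)^2 * Real.sin (a+t*b) * fpos (2*(e+t*d)*Real.sin ((a+t*b)/2)))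
      + d * (2*(e+t*d)*(1 - Real.cos (a+t*b)) * fpos (2*(e+t*d)*Real.sin ((a+t*b)/2))))
    (Dfun b d (e+t*d) (Real.sin ((a+t*b)/2)) (Real.cos ((a+t*b)/2))
      (Real.sin (a+t*b)) (Real.cos (a+t*b))) t := by
  have hu : HasDerivAt (fun t : ℝ => a + t*b) b t := by
    simpa using ((hasDerivAt_id t).mul_const b).const_add a
  have hv : HasDerivAt (fun t : ℝ => e + t*d) d t := by
    simpa using ((hasDerivAt_id t).mul_const d).const_add e
  have hs1 : HasDerivAt (fun t : ℝ => Real.sin ((a+t*b)/2))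
      (Real.cos ((a+t*b)/2) * (b/2)) t := (hu.div_const 2).sin
  have hX : HasDerivAt (fun t : ℝ => 2*(e+t*d)*Real.sin ((a+t*b)/2))
      (2*d*Real.sin ((a+t*b)/2) + 2*(e+t*d)*(Real.cos ((a+t*b)/2)*(b/2))) t := by
    exact (hv.const_mul 2).mul hs1
  have hWd : HasDerivAt (fun t : ℝ =>
      (2*(e+t*d)*Real.sin ((a+t*b)/2))^2 - (2*(e+t*d)*Real.sin ((a+t*b)/2))^4/4)
      ((2:ℕ) * (2*(e+t*d)*Real.sin ((a+t*b)/2))^1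
          * (2*d*Real.sin ((a+t*b)/2) + 2*(e+t*d)*(Real.cos ((a+t*b)/2)*(b/2)))
        - ((4:ℕ) * (2*(e+t*d)*Real.sin ((a+t*b)/2))^3
          * (2*d*Real.sin ((a+t*b)/2) + 2*(e+t*d)*(Real.cos ((a+t*b)/2)*(b/2))))/4) t :=
    (hX.pow 2).sub ((hX.pow 4).div_const 4)
  have hF : HasDerivAt (fun t : ℝ => fpos (2*(e+t*d)*Real.sin ((a+t*b)/2)))
      (((2:ℕ) * (2*(e+t*d)*Real.sin ((a+t*b)/2))^1
          * (2*d*Real.sin ((a+t*b)/2) + 2*(e+t*d)*(Real.cos ((a+t*b)/2)*(b/2)))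
        - ((4:ℕ) * (2*(e+t*d)*Real.sin ((a+t*b)/2))^3
          * (2*d*Real.sin ((a+t*b)/2) + 2*(e+t*d)*(Real.cos ((a+t*b)/2)*(b/2))))/4)
        * (-(3:ℝ)/2)
        * ((2*(e+t*d)*Real.sin ((a+t*b)/2))^2 - (2*(e+t*d)*Real.sin ((a+t*b)/2))^4/4)
            ^ (-(3:ℝ)/2 - 1)) t := by
    simp only [fpos]
    exact hWd.rpow_const (Or.inl hW)
  have hsinU : HasDerivAt (fun t : ℝ => Real.sin (a+t*b)) (Real.cos (a+t*b) * b) t := hu.sin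
  have hcosU : HasDerivAt (fun t : ℝ => 1 - Real.cos (a+t*b)) (Real.sin (a+t*b) * b) t := by
    simpa using (hu.cos).const_sub 1
  have hP1 : HasDerivAt (fun t : ℝ =>
      (e+t*d)^2 * Real.sin (a+t*b) * fpos (2*(e+t*d)*Real.sin ((a+t*b)/2))) _ t :=
    (((hv.pow 2).mul hsinU).mul hF)
  have hP2 : HasDerivAt (fun t : ℝ =>
      2*(e+t*d)*(1 - Real.cos (a+t*b)) * fpos (2*(e+t*d)*Real.sin ((a+t*b)/2))) _ t :=
    (((hv.const_mul 2).mul hcosU).mul hF)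
  have := (hP1.const_mul b).add (hP2.const_mul d)
  refine this.congr_deriv ?_
  simp only [Dfun, fpos, Pi.pow_apply, Pi.mul_apply]
  push_cast
  ring

/-- The directional derivative is negative on the domain. -/
lemma Dneg (b d u v : ℝ) (hu : 0 < u) (hu2 : u < 2*π) (hv : 0 < v)
    (hvlt : v < Real.sqrt 10 / 5) (hbd : ¬(b = 0 ∧ d = 0)) :
    Dfun b d v (Real.sin (u/2)) (Real.cos (u/2)) (Real.sin u) (Real.cos u) < 0 := by
  have hπ := Real.pi_pos
  have hs : 0 < Real.sin (u/2) := Real.sin_pos_of_pos_of_lt_pi (by linarith) (by linarith)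
  have hs1 : Real.sin (u/2) ≤ 1 := Real.sin_le_one _
  have hsc : Real.sin (u/2)^2 + Real.cos (u/2)^2 = 1 := Real.sin_sq_add_cos_sq _
  have hv2 : v^2 < 2/5 := by
    have h10 : Real.sqrt 10 ^ 2 = 10 := Real.sq_sqrt (by norm_num)
    nlinarith [Real.sqrt_nonneg 10]
  have hsinU : Real.sin u = 2*Real.sin (u/2)*Real.cos (u/2) := by
    have h := Real.sin_two_mul (u/2); rwa [show 2*(u/2) = u by ring] at h
  have hcosU : Real.cos u = 1 - 2*Real.sin (u/2)^2 := by
    have h := Real.cos_two_mul (u/2); rw [show 2*(u/2) = u by ring] at h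
    rw [h]; linarith
  have hss : Real.sin (u/2)^2 ≤ 1 := by nlinarith
  have hx2 : (2*v*Real.sin (u/2))^2 < 8/5 := by
    nlinarith [mul_le_mul_of_nonneg_left hss (sq_nonneg v)]
  have hxpos : (0:ℝ) < (2*v*Real.sin (u/2))^2 := by positivity
  have hw : 0 < (2*v*Real.sin (u/2))^2 - (2*v*Real.sin (u/2))^4/4 := by nlinarith
  have hC : 0 < ((2*v*Real.sin (u/2))^2 - (2*v*Real.sin (u/2))^4/4) ^ (-(5:ℝ)/2) :=
    Real.rpow_pos_of_pos hw _
  have hrw2 : (-(3:ℝ)/2 - 1 : ℝ) = -(5:ℝ)/2 := by norm_num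
  have hrw1 : ((2*v*Real.sin (u/2))^2 - (2*v*Real.sin (u/2))^4/4) ^ (-(3:ℝ)/2)
      = ((2*v*Real.sin (u/2))^2 - (2*v*Real.sin (u/2))^4/4)
        * ((2*v*Real.sin (u/2))^2 - (2*v*Real.sin (u/2))^4/4) ^ (-(5:ℝ)/2) := by
    rw [show (-(3:ℝ)/2) = 1 + (-(5:ℝ)/2) by norm_num, Real.rpow_add hw, Real.rpow_one]
  have hDeq : Dfun b d v (Real.sin (u/2)) (Real.cos (u/2)) (Real.sin u) (Real.cos u)
      = (v^2*(1-2*Real.sin (u/2)^2)*((2*v*Real.sin (u/2))^2-(2*v*Real.sin (u/2))^4/4)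
            *(((2*v*Real.sin (u/2))^2 - (2*v*Real.sin (u/2))^4/4) ^ (-(5:ℝ)/2))
          + 2*v^3*Real.sin (u/2)*Real.cos (u/2)^2
            *(-(3/2)*(((2*v*Real.sin (u/2))^2 - (2*v*Real.sin (u/2))^4/4) ^ (-(5:ℝ)/2))
              *(2*(2*v*Real.sin (u/2))-(2*v*Real.sin (u/2))^3)))*b^2
        + 2*(4*v*Real.sin (u/2)*Real.cos (u/2)
              *((2*v*Real.sin (u/2))^2-(2*v*Real.sin (u/2))^4/4)
              *(((2*v*Real.sin (u/2))^2 - (2*v*Real.sin (u/2))^4/4) ^ (-(5:ℝ)/2))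
          + 4*v^2*Real.sin (u/2)^2*Real.cos (u/2)
              *(-(3/2)*(((2*v*Real.sin (u/2))^2 - (2*v*Real.sin (u/2))^4/4) ^ (-(5:ℝ)/2))
                *(2*(2*v*Real.sin (u/2))-(2*v*Real.sin (u/2))^3)))*(b*d)
        + (4*Real.sin (u/2)^2*((2*v*Real.sin (u/2))^2-(2*v*Real.sin (u/2))^4/4)
              *(((2*v*Real.sin (u/2))^2 - (2*v*Real.sin (u/2))^4/4) ^ (-(5:ℝ)/2))
          + 8*v*Real.sin (u/2)^3
              *(-(3/2)*(((2*v*Real.sin (u/2))^2 - (2*v*Real.sin (u/2))^4/4) ^ (-(5:ℝ)/2))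
                *(2*(2*v*Real.sin (u/2))-(2*v*Real.sin (u/2))^3)))*d^2 := by
    simp only [Dfun]
    rw [hsinU, hcosU, hrw2, hrw1]
    ring
  rw [hDeq]
  exact quadD (Real.sin (u/2)) (Real.cos (u/2)) v
    (((2*v*Real.sin (u/2))^2 - (2*v*Real.sin (u/2))^4/4) ^ (-(5:ℝ)/2)) b d
    hs hs1 hsc hv hv2 hC hbd

/-- Strict monotonicity inequality for the gradient of the pair potential:
the pair potential is strictly concave on `(0,2π) × (0, √10/5)`. -/
lemma key {θ θ' ρ ρ' : ℝ} (hθa : 0 < θ) (hθb : θ < 2*π) (hθa' : 0 < θ') (hθb' : θ' < 2*π)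
    (hρa : 0 < ρ) (hρb : ρ < Real.sqrt 10/5) (hρa' : 0 < ρ') (hρb' : ρ' < Real.sqrt 10/5)
    (hne : ¬(θ = θ' ∧ ρ = ρ')) :
    (θ-θ')*(Pth θ ρ - Pth θ' ρ') + (ρ-ρ')*(Prh θ ρ - Prh θ' ρ') < 0 := by
  have hπ := Real.pi_pos
  have hudom : ∀ t ∈ Set.Icc (0:ℝ) 1, 0 < θ' + t*(θ-θ') ∧ θ' + t*(θ-θ') < 2*π := by
    intro t ht
    constructor
    · nlinarith [ht.1, ht.2, mul_nonneg ht.1 hθa.le,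
        mul_nonneg (sub_nonneg.mpr ht.2) hθa'.le]
    · nlinarith [ht.1, ht.2, mul_nonneg ht.1 (sub_nonneg.mpr hθb.le),
        mul_nonneg (sub_nonneg.mpr ht.2) (sub_nonneg.mpr hθb'.le)]
  have hvdom : ∀ t ∈ Set.Icc (0:ℝ) 1, 0 < ρ' + t*(ρ-ρ') ∧ ρ' + t*(ρ-ρ') < Real.sqrt 10/5 := by
    intro t ht
    constructor
    · nlinarith [ht.1, ht.2, mul_nonneg ht.1 hρa.le,
        mul_nonneg (sub_nonneg.mpr ht.2) hρa'.le]
    · nlinarith [ht.1, ht.2, mul_nonneg ht.1 (sub_nonneg.mpr hρb.le),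
        mul_nonneg (sub_nonneg.mpr ht.2) (sub_nonneg.mpr hρb'.le)]
  have hWpos : ∀ t ∈ Set.Icc (0:ℝ) 1,
      0 < (2*(ρ'+t*(ρ-ρ'))*Real.sin ((θ'+t*(θ-θ'))/2))^2
        - (2*(ρ'+t*(ρ-ρ'))*Real.sin ((θ'+t*(θ-θ'))/2))^4/4 := by
    intro t ht
    obtain ⟨hu1, hu2⟩ := hudom t ht
    obtain ⟨hv1, hv2⟩ := hvdom t ht
    have hs : 0 < Real.sin ((θ'+t*(θ-θ'))/2) :=
      Real.sin_pos_of_pos_of_lt_pi (by linarith) (by linarith)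
    have h10 : Real.sqrt 10 ^ 2 = 10 := Real.sq_sqrt (by norm_num)
    have hv2' : (ρ'+t*(ρ-ρ'))^2 < 2/5 := by nlinarith [Real.sqrt_nonneg 10]
    have hx2 : (2*(ρ'+t*(ρ-ρ'))*Real.sin ((θ'+t*(θ-θ'))/2))^2 < 8/5 := by
      nlinarith [mul_le_mul_of_nonneg_left
        (show Real.sin ((θ'+t*(θ-θ'))/2)^2 ≤ 1 by
          nlinarith [Real.sin_le_one ((θ'+t*(θ-θ'))/2)])
        (sq_nonneg (ρ'+t*(ρ-ρ')))]
    have hxpos : (0:ℝ) < (2*(ρ'+t*(ρ-ρ'))*Real.sin ((θ'+t*(θ-θ'))/2))^2 := by positivity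
    nlinarith
  set Q : ℝ → ℝ := fun t =>
      (θ-θ') * ((ρ'+t*(ρ-ρ'))^2 * Real.sin (θ'+t*(θ-θ'))
          * fpos (2*(ρ'+t*(ρ-ρ'))*Real.sin ((θ'+t*(θ-θ'))/2)))
    + (ρ-ρ') * (2*(ρ'+t*(ρ-ρ'))*(1 - Real.cos (θ'+t*(θ-θ')))
          * fpos (2*(ρ'+t*(ρ-ρ'))*Real.sin ((θ'+t*(θ-θ'))/2))) with hQdef
  have hQder : ∀ t ∈ Set.Icc (0:ℝ) 1, HasDerivAt Q
      (Dfun (θ-θ') (ρ-ρ') (ρ'+t*(ρ-ρ')) (Real.sin ((θ'+t*(θ-θ'))/2))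
        (Real.cos ((θ'+t*(θ-θ'))/2)) (Real.sin (θ'+t*(θ-θ'))) (Real.cos (θ'+t*(θ-θ')))) t :=
    fun t ht => hasDerivAt_aux θ' (θ-θ') ρ' (ρ-ρ') t (ne_of_gt (hWpos t ht))
  have hbd : ¬(θ-θ' = 0 ∧ ρ-ρ' = 0) := by
    intro h
    exact hne ⟨by linarith [h.1], by linarith [h.2]⟩
  have hanti : StrictAntiOn Q (Set.Icc 0 1) := by
    apply strictAntiOn_of_deriv_neg (convex_Icc 0 1)
    · intro t ht
      exact (hQder t ht).continuousAt.continuousWithinAt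
    · intro t ht
      rw [interior_Icc] at ht
      have ht' : t ∈ Set.Icc (0:ℝ) 1 := Set.mem_Icc_of_Ioo ht
      rw [(hQder t ht').deriv]
      exact Dneg (θ-θ') (ρ-ρ') (θ'+t*(θ-θ')) (ρ'+t*(ρ-ρ'))
        (hudom t ht').1 (hudom t ht').2 (hvdom t ht').1 (hvdom t ht').2 hbd
  have h10 : Q 1 < Q 0 :=
    hanti (Set.mem_Icc.mpr ⟨le_refl 0, zero_le_one⟩)
      (Set.mem_Icc.mpr ⟨zero_le_one, le_refl 1⟩) zero_lt_one
  have hQ1 : Q 1 = (θ-θ')*Pth θ ρ + (ρ-ρ')*Prh θ ρ := by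
    rw [hQdef]
    simp only [Pth, Prh]
    norm_num
  have hQ0 : Q 0 = (θ-θ')*Pth θ' ρ' + (ρ-ρ')*Prh θ' ρ' := by
    rw [hQdef]
    simp only [Pth, Prh]
    norm_num
  rw [hQ1, hQ0] at h10
  linarith

/-- Normalized angular difference, lying in `(0, 2π)` for `i ≠ j`. -/
noncomputable def bfun {n : ℕ} (α : Fin n → ℝ) (i j : Fin n) : ℝ :=
  α j - α i + (if j < i then 2*π else 0)

lemma bfun_mem {n : ℕ} {α : Fin n → ℝ} (hnn : ∀ i, 0 ≤ α i) (h2π : ∀ i, α i < 2*π)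
    (hmono : StrictMono α) {i j : Fin n} (hij : i ≠ j) :
    0 < bfun α i j ∧ bfun α i j < 2*π := by
  have hπ := Real.pi_pos
  rcases lt_or_gt_of_ne hij with h | h
  · have h1 := hmono h
    rw [bfun, if_neg (asymm h)]
    exact ⟨by linarith, by linarith [hnn i, h2π j]⟩
  · have h1 := hmono h
    rw [bfun, if_pos h]
    exact ⟨by linarith [hnn j, h2π i], by linarith⟩

lemma bfun_flip {n : ℕ} (α : Fin n → ℝ) {i j : Fin n} (hij : i ≠ j) :
    bfun α i j = 2*π - bfun α j i := by
  rcases lt_or_gt_of_ne hij with h | h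
  · rw [bfun, bfun, if_neg (asymm h), if_pos h]; ring
  · rw [bfun, bfun, if_pos h, if_neg (asymm h)]; ring

lemma bfun_sin {n : ℕ} (α : Fin n → ℝ) (i j : Fin n) :
    Real.sin (bfun α i j) = Real.sin (α j - α i) := by
  rw [bfun]; split_ifs with h
  · exact Real.sin_add_two_pi _
  · rw [add_zero]

lemma bfun_cos {n : ℕ} (α : Fin n → ℝ) (i j : Fin n) :
    Real.cos (bfun α i j) = Real.cos (α j - α i) := by
  rw [bfun]; split_ifs with h
  · exact Real.cos_add_two_pi _
  · rw [add_zero]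

lemma chord_eq {ρ b w : ℝ} (hρ : 0 ≤ ρ) (hb0 : 0 < b) (hb2 : b < 2*π)
    (hcos : Real.cos b = Real.cos w) :
    Real.sqrt 2 * ρ * Real.sqrt (1 - Real.cos w) = 2*ρ*Real.sin (b/2) := by
  have hπ := Real.pi_pos
  have hsnn : 0 ≤ Real.sin (b/2) :=
    Real.sin_nonneg_of_nonneg_of_le_pi (by linarith) (by linarith)
  have h1 : 1 - Real.cos w = 2 * Real.sin (b/2)^2 := by
    rw [← hcos]
    have h := Real.cos_two_mul (b/2); rw [show 2*(b/2) = b by ring] at h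
    have h2 := Real.sin_sq_add_cos_sq (b/2)
    linarith
  rw [h1, Real.sqrt_mul (by norm_num : (0:ℝ) ≤ 2), Real.sqrt_sq hsnn]
  have h2 : Real.sqrt 2 * Real.sqrt 2 = 2 := Real.mul_self_sqrt (by norm_num)
  linear_combination (ρ * Real.sin (b/2)) * h2

lemma Pth_term {n : ℕ} {α : Fin n → ℝ} (hnn : ∀ i, 0 ≤ α i) (h2π : ∀ i, α i < 2*π)
    (hmono : StrictMono α) {r : ℝ} (hr : 0 ≤ r) {i j : Fin n} (hij : i ≠ j) :
    Pth (bfun α i j) r = r^2 * Real.sin (α j - α i)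
      * fpos (Real.sqrt 2 * r * Real.sqrt (1 - Real.cos (α j - α i))) := by
  obtain ⟨hb0, hb2⟩ := bfun_mem hnn h2π hmono hij
  simp only [Pth]
  rw [bfun_sin, ← chord_eq hr hb0 hb2 (bfun_cos α i j)]

lemma Prh_term {n : ℕ} {α : Fin n → ℝ} (hnn : ∀ i, 0 ≤ α i) (h2π : ∀ i, α i < 2*π)
    (hmono : StrictMono α) {r : ℝ} (hr : 0 ≤ r) {i j : Fin n} (hij : i ≠ j) :
    Prh (bfun α i j) r = 2*r*((1 - Real.cos (α j - α i))
      * fpos (Real.sqrt 2 * r * Real.sqrt (1 - Real.cos (α j - α i)))) := by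
  obtain ⟨hb0, hb2⟩ := bfun_mem hnn h2π hmono hij
  simp only [Prh]
  rw [bfun_cos, ← chord_eq hr hb0 hb2 (bfun_cos α i j)]
  ring

lemma Pth_flip (b ρ : ℝ) : Pth (2*π - b) ρ = -(Pth b ρ) := by
  simp only [Pth]
  have h1 : Real.sin (2*π - b) = -Real.sin b := by
    rw [show 2*π - b = -b + 2*π by ring, Real.sin_add_two_pi, Real.sin_neg]
  have h2 : Real.sin ((2*π - b)/2) = Real.sin (b/2) := by
    rw [show (2*π - b)/2 = π - b/2 by ring, Real.sin_pi_sub]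
  rw [h1, h2]; ring

lemma row_col {n : ℕ} (m : Fin n → ℝ) {α : Fin n → ℝ} {r : ℝ} (Asq : ℝ) (hr : 0 ≤ r)
    (hnn : ∀ i, 0 ≤ α i) (h2π : ∀ i, α i < 2*π) (hmono : StrictMono α)
    (hrad : ∀ i, Asq = ∑ j ∈ Finset.univ.erase i, m j * (1 - Real.cos (α j - α i))
        * fpos (Real.sqrt 2 * r * Real.sqrt (1 - Real.cos (α j - α i))))
    (htan : ∀ i, 0 = ∑ j ∈ Finset.univ.erase i, m j * Real.sin (α j - α i)
        * fpos (Real.sqrt 2 * r * Real.sqrt (1 - Real.cos (α j - α i)))) :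
    (∀ i, ∑ j, m j * Pth (bfun α i j) r = 0)
    ∧ (∀ i, ∑ j, m j * Prh (bfun α i j) r = 2*r*Asq)
    ∧ (∀ j, ∑ i, m i * Pth (bfun α i j) r = 0) := by
  have hrow : ∀ i, ∑ j, m j * Pth (bfun α i j) r = 0 := by
    intro i
    rw [← Finset.add_sum_erase Finset.univ (fun j => m j * Pth (bfun α i j) r)
      (Finset.mem_univ i)]
    have hdiag : Pth (bfun α i i) r = 0 := by simp [bfun, Pth]
    rw [hdiag, mul_zero, zero_add]
    have hcong : ∀ j ∈ Finset.univ.erase i, m j * Pth (bfun α i j) r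
        = r^2 * (m j * Real.sin (α j - α i)
          * fpos (Real.sqrt 2 * r * Real.sqrt (1 - Real.cos (α j - α i)))) := by
      intro j hj
      rw [Pth_term hnn h2π hmono hr (Finset.ne_of_mem_erase hj).symm]
      ring
    rw [Finset.sum_congr rfl hcong, ← Finset.mul_sum, ← htan i, mul_zero]
  refine ⟨hrow, ?_, ?_⟩
  · intro i
    rw [← Finset.add_sum_erase Finset.univ (fun j => m j * Prh (bfun α i j) r)
      (Finset.mem_univ i)]
    have hdiag : Prh (bfun α i i) r = 0 := by simp [bfun, Prh]
    rw [hdiag, mul_zero, zero_add]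
    have hcong : ∀ j ∈ Finset.univ.erase i, m j * Prh (bfun α i j) r
        = (2*r) * (m j * (1 - Real.cos (α j - α i))
          * fpos (Real.sqrt 2 * r * Real.sqrt (1 - Real.cos (α j - α i)))) := by
      intro j hj
      rw [Prh_term hnn h2π hmono hr (Finset.ne_of_mem_erase hj).symm]
      ring
    rw [Finset.sum_congr rfl hcong, ← Finset.mul_sum, ← hrad i]
  · intro j
    have hcong : ∀ i : Fin n, m i * Pth (bfun α i j) r = -(m i * Pth (bfun α j i) r) := by
      intro i
      by_cases h : i = j
      · subst h; simp [bfun, Pth]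
      · rw [bfun_flip α h, Pth_flip]; ring
    rw [Finset.sum_congr rfl (fun i _ => hcong i), Finset.sum_neg_distrib, hrow j, neg_zero]

/-- For `σ = 1`, fixed masses `m₁,…,mₙ > 0` and fixed angular velocity `A > 0`,
there is at most one tuple `(r, α₁,…,αₙ)` with `0 < r < (1/5)√10` and
`0 = α₁ < α₂ < … < αₙ < 2π` solving the polygonal positive elliptic relative
equilibrium system
`A² = Σ_{j≠i} m_j (1 − cos(α_j−α_i)) f(√2 r √(1−cos(α_j−α_i)))`,
`0 = Σ_{j≠i} m_j sin(α_j−α_i) f(√2 r √(1−cos(α_j−α_i)))`. -/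
theorem positive_elliptic_relative_equilibrium_unique
    (n : ℕ) (hn : 2 ≤ n) (m : Fin n → ℝ) (hm : ∀ i, 0 < m i)
    (A : ℝ) (hA : 0 < A)
    (r r' : ℝ) (α α' : Fin n → ℝ)
    (hr : 0 < r) (hrlt : r < Real.sqrt 10 / 5)
    (hr' : 0 < r') (hr'lt : r' < Real.sqrt 10 / 5)
    (hα0 : α ⟨0, by omega⟩ = 0) (hα'0 : α' ⟨0, by omega⟩ = 0)
    (hαmono : StrictMono α) (hα'mono : StrictMono α')
    (hα2π : ∀ i, α i < 2 * π) (hα'2π : ∀ i, α' i < 2 * π)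
    (hsys : ∀ i : Fin n,
      A ^ 2 = (∑ j ∈ Finset.univ.erase i,
          m j * (1 - Real.cos (α j - α i)) *
            fpos (Real.sqrt 2 * r * Real.sqrt (1 - Real.cos (α j - α i)))) ∧
      0 = ∑ j ∈ Finset.univ.erase i,
          m j * Real.sin (α j - α i) *
            fpos (Real.sqrt 2 * r * Real.sqrt (1 - Real.cos (α j - α i))))
    (hsys' : ∀ i : Fin n,
      A ^ 2 = (∑ j ∈ Finset.univ.erase i,
          m j * (1 - Real.cos (α' j - α' i)) *
            fpos (Real.sqrt 2 * r' * Real.sqrt (1 - Real.cos (α' j - α' i)))) ∧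
      0 = ∑ j ∈ Finset.univ.erase i,
          m j * Real.sin (α' j - α' i) *
            fpos (Real.sqrt 2 * r' * Real.sqrt (1 - Real.cos (α' j - α' i)))) :
    r = r' ∧ ∀ i, α i = α' i := by
  obtain ⟨i0, hi0⟩ : ∃ i : Fin n, i.val = 0 := ⟨⟨0, by omega⟩, rfl⟩
  have hα0' : α i0 = 0 := by
    have h : i0 = (⟨0, by omega⟩ : Fin n) := Fin.ext hi0
    rw [h]; exact hα0
  have hα'0' : α' i0 = 0 := by
    have h : i0 = (⟨0, by omega⟩ : Fin n) := Fin.ext hi0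
    rw [h]; exact hα'0
  have hle0 : ∀ i : Fin n, i0 ≤ i := fun i => by
    rw [Fin.le_def, hi0]; exact Nat.zero_le _
  have hnn : ∀ i, 0 ≤ α i := fun i => hα0' ▸ hαmono.monotone (hle0 i)
  have hnn' : ∀ i, 0 ≤ α' i := fun i => hα'0' ▸ hα'mono.monotone (hle0 i)
  obtain ⟨hrowT, hrowR, hcolT⟩ :=
    row_col m (A^2) hr.le hnn hα2π hαmono (fun i => (hsys i).1) (fun i => (hsys i).2)
  obtain ⟨hrowT', hrowR', hcolT'⟩ :=
    row_col m (A^2) hr'.le hnn' hα'2π hα'mono (fun i => (hsys' i).1) (fun i => (hsys' i).2)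
  have hM : 0 < ∑ i, m i := Finset.sum_pos (fun i _ => hm i) ⟨i0, Finset.mem_univ i0⟩
  -- Expansion of each term of the comparison sum
  have hFexp : ∀ i j : Fin n,
      m i * m j * ((bfun α i j - bfun α' i j) * (Pth (bfun α i j) r - Pth (bfun α' i j) r')
        + (r - r') * (Prh (bfun α i j) r - Prh (bfun α' i j) r'))
      = (m j * (α j - α' j)) * (m i * Pth (bfun α i j) r)
      - (m i * (α i - α' i)) * (m j * Pth (bfun α i j) r)
      - (m j * (α j - α' j)) * (m i * Pth (bfun α' i j) r')
      + (m i * (α i - α' i)) * (m j * Pth (bfun α' i j) r')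
      + ((r - r') * (m i * (m j * Prh (bfun α i j) r))
        - (r - r') * (m i * (m j * Prh (bfun α' i j) r'))) := by
    intro i j
    have hdiff : bfun α i j - bfun α' i j = (α j - α' j) - (α i - α' i) := by
      simp only [bfun]; split_ifs <;> ring
    linear_combination
      (m i * m j * (Pth (bfun α i j) r - Pth (bfun α' i j) r')) * hdiff
  have hcol0 : ∑ i, ∑ j, (m j * (α j - α' j)) * (m i * Pth (bfun α i j) r) = 0 := by
    rw [Finset.sum_comm]
    have h1 : ∀ j : Fin n, ∑ i, (m j * (α j - α' j)) * (m i * Pth (bfun α i j) r)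
        = (m j * (α j - α' j)) * ∑ i, m i * Pth (bfun α i j) r := by
      intro j; rw [Finset.mul_sum]
    rw [Finset.sum_congr rfl (fun j _ => h1 j)]
    simp [hcolT]
  have hcol0' : ∑ i, ∑ j, (m j * (α j - α' j)) * (m i * Pth (bfun α' i j) r') = 0 := by
    rw [Finset.sum_comm]
    have h1 : ∀ j : Fin n, ∑ i, (m j * (α j - α' j)) * (m i * Pth (bfun α' i j) r')
        = (m j * (α j - α' j)) * ∑ i, m i * Pth (bfun α' i j) r' := by
      intro j; rw [Finset.mul_sum]
    rw [Finset.sum_congr rfl (fun j _ => h1 j)]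
    simp [hcolT']
  have hrow0 : ∑ i, ∑ j, (m i * (α i - α' i)) * (m j * Pth (bfun α i j) r) = 0 := by
    have h1 : ∀ i : Fin n, ∑ j, (m i * (α i - α' i)) * (m j * Pth (bfun α i j) r)
        = (m i * (α i - α' i)) * ∑ j, m j * Pth (bfun α i j) r := by
      intro i; rw [Finset.mul_sum]
    rw [Finset.sum_congr rfl (fun i _ => h1 i)]
    simp [hrowT]
  have hrow0' : ∑ i, ∑ j, (m i * (α i - α' i)) * (m j * Pth (bfun α' i j) r') = 0 := by
    have h1 : ∀ i : Fin n, ∑ j, (m i * (α i - α' i)) * (m j * Pth (bfun α' i j) r')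
        = (m i * (α i - α' i)) * ∑ j, m j * Pth (bfun α' i j) r' := by
      intro i; rw [Finset.mul_sum]
    rw [Finset.sum_congr rfl (fun i _ => h1 i)]
    simp [hrowT']
  have hrad5 : ∑ i, ∑ j, (r - r') * (m i * (m j * Prh (bfun α i j) r))
      = (r - r') * (2*r*A^2) * ∑ i, m i := by
    have h1 : ∀ i : Fin n, ∑ j, (r - r') * (m i * (m j * Prh (bfun α i j) r))
        = (r - r') * (2*r*A^2) * m i := by
      intro i
      rw [show (∑ j, (r - r') * (m i * (m j * Prh (bfun α i j) r)))
          = (r - r') * (m i * ∑ j, m j * Prh (bfun α i j) r) by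
        rw [Finset.mul_sum, Finset.mul_sum]]
      rw [hrowR i]; ring
    rw [Finset.sum_congr rfl (fun i _ => h1 i), Finset.mul_sum]
  have hrad6 : ∑ i, ∑ j, (r - r') * (m i * (m j * Prh (bfun α' i j) r'))
      = (r - r') * (2*r'*A^2) * ∑ i, m i := by
    have h1 : ∀ i : Fin n, ∑ j, (r - r') * (m i * (m j * Prh (bfun α' i j) r'))
        = (r - r') * (2*r'*A^2) * m i := by
      intro i
      rw [show (∑ j, (r - r') * (m i * (m j * Prh (bfun α' i j) r')))
          = (r - r') * (m i * ∑ j, m j * Prh (bfun α' i j) r') by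
        rw [Finset.mul_sum, Finset.mul_sum]]
      rw [hrowR' i]; ring
    rw [Finset.sum_congr rfl (fun i _ => h1 i), Finset.mul_sum]
  have hsplit : (∑ i, ∑ j, m i * m j *
        ((bfun α i j - bfun α' i j) * (Pth (bfun α i j) r - Pth (bfun α' i j) r')
          + (r - r') * (Prh (bfun α i j) r - Prh (bfun α' i j) r')))
      = 2*A^2*(∑ i, m i)*(r-r')^2 := by
    rw [Finset.sum_congr rfl (fun i _ => Finset.sum_congr rfl (fun j _ => hFexp i j))]
    simp only [Finset.sum_add_distrib, Finset.sum_sub_distrib]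
    rw [hcol0, hrow0, hcol0', hrow0', hrad5, hrad6]
    ring
  have hle : ∀ i j : Fin n, m i * m j *
      ((bfun α i j - bfun α' i j) * (Pth (bfun α i j) r - Pth (bfun α' i j) r')
        + (r - r') * (Prh (bfun α i j) r - Prh (bfun α' i j) r')) ≤ 0 := by
    intro i j
    by_cases hij : i = j
    · subst hij
      have hb : bfun α i i = 0 := by simp [bfun]
      have hb' : bfun α' i i = 0 := by simp [bfun]
      rw [hb, hb']
      have hP : Prh 0 r = 0 := by simp [Prh]
      have hP' : Prh 0 r' = 0 := by simp [Prh]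
      rw [hP, hP']
      simp
    · by_cases heq : bfun α i j = bfun α' i j ∧ r = r'
      · rw [heq.1, heq.2]
        simp
      · have hb := bfun_mem hnn hα2π hαmono hij
        have hb' := bfun_mem hnn' hα'2π hα'mono hij
        have hk := key hb.1 hb.2 hb'.1 hb'.2 hr hrlt hr' hr'lt heq
        exact (mul_neg_of_pos_of_neg (mul_pos (hm i) (hm j)) hk).le
  have hSnonpos : (∑ i, ∑ j, m i * m j *
      ((bfun α i j - bfun α' i j) * (Pth (bfun α i j) r - Pth (bfun α' i j) r')
        + (r - r') * (Prh (bfun α i j) r - Prh (bfun α' i j) r'))) ≤ 0 :=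
    Finset.sum_nonpos fun i _ => Finset.sum_nonpos fun j _ => hle i j
  rw [hsplit] at hSnonpos
  have hrr' : r = r' := by
    have h2 : (r - r')^2 ≤ 0 := by
      nlinarith [mul_pos (mul_pos (show (0:ℝ) < 2 by norm_num) (pow_pos hA 2)) hM]
    have h3 : (r - r')^2 = 0 := le_antisymm h2 (sq_nonneg _)
    have h4 : r - r' = 0 := (pow_eq_zero_iff (by norm_num : 2 ≠ 0)).mp h3
    linarith
  have hSzero : (∑ i, ∑ j, m i * m j *
      ((bfun α i j - bfun α' i j) * (Pth (bfun α i j) r - Pth (bfun α' i j) r')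
        + (r - r') * (Prh (bfun α i j) r - Prh (bfun α' i j) r'))) = 0 := by
    rw [hsplit, hrr']; ring
  have houter := (Finset.sum_eq_zero_iff_of_nonpos
    (fun i _ => Finset.sum_nonpos fun j _ => hle i j)).mp hSzero
  have hterm0 : ∀ i j : Fin n, m i * m j *
      ((bfun α i j - bfun α' i j) * (Pth (bfun α i j) r - Pth (bfun α' i j) r')
        + (r - r') * (Prh (bfun α i j) r - Prh (bfun α' i j) r')) = 0 := fun i j =>
    (Finset.sum_eq_zero_iff_of_nonpos (fun j _ => hle i j)).mp
      (houter i (Finset.mem_univ i)) j (Finset.mem_univ j)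
  refine ⟨hrr', fun i => ?_⟩
  by_cases hi : i = i0
  · rw [hi, hα0', hα'0']
  · have hij : i0 ≠ i := fun h => hi h.symm
    have hbeq : bfun α i0 i = bfun α' i0 i := by
      by_contra hne2
      have hb := bfun_mem hnn hα2π hαmono hij
      have hb' := bfun_mem hnn' hα'2π hα'mono hij
      have hk := key hb.1 hb.2 hb'.1 hb'.2 hr hrlt hr' hr'lt (fun h => hne2 h.1)
      have hcontr := mul_neg_of_pos_of_neg (mul_pos (hm i0) (hm i)) hk
      have h0 := hterm0 i0 i
      linarith
    have hnotlt : ¬ i < i0 := by rw [Fin.lt_def, hi0]; omega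
    rw [bfun, bfun, if_neg hnotlt, hα0', hα'0'] at hbeq
    linarith
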